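/- (Dimension-dependent strong subadditivity for the linear entropy) For any tripartite density matrix ρ_ABC on C^{d_A} ⊗ C^{d_B} ⊗ C^{d_C}, with S_L(ρ) := 1 − Tr(ρ²), the identity d_A d_B d_C · Tr(ρ_ABC²) ≥ d_A d_C Tr(ρ_AC²) + d_B d_C Tr(ρ_BC²) − d_C Tr(ρ_C²) holds, equivalently S_L(ρ_ABC) + (1/(d_A d_B)) S_L(ρ_C) ≤ (1/d_B) S_L(ρ_AC) + (1/d_A) S_L(ρ_BC) + (d_A d_B + 1 − d_A − d_B)/(d_A d_B). -/

import Mathlib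

open Matrix BigOperators Kronecker ComplexOrder

noncomputable def purity {n : Type*} [Fintype n] (ρ : Matrix n n ℂ) : ℝ :=
  ((ρ * ρ).trace).re

def IsDensity {n : Type*} [Fintype n] (ρ : Matrix n n ℂ) : Prop :=
  ρ.PosSemidef ∧ ρ.trace = 1

noncomputable def ptraceB {m p : Type*} [Fintype p] (ρ : Matrix (m × p) (m × p) ℂ) :
    Matrix m m ℂ :=
  Matrix.of fun i j => ∑ k, ρ (i, k) (j, k)

noncomputable def ptraceA {m p : Type*} [Fintype m] (ρ : Matrix (m × p) (m × p) ℂ) :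
    Matrix p p ℂ :=
  Matrix.of fun i j => ∑ k, ρ (k, i) (k, j)

noncomputable def ptraceMid {a b c : Type*} [Fintype b]
    (ρ : Matrix (a × b × c) (a × b × c) ℂ) : Matrix (a × c) (a × c) ℂ :=
  Matrix.of fun i j => ∑ k, ρ (i.1, k, i.2) (j.1, k, j.2)

noncomputable def linEnt {n : Type*} [Fintype n] (ρ : Matrix n n ℂ) : ℝ := 1 - purity ρ

namespace SSAaux

/-- Frobenius norm squared. -/
noncomputable def Fr {n : Type*} [Fintype n] (M : Matrix n n ℂ) : ℝ :=
  ∑ x : n × n, Complex.normSq (M x.1 x.2)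

lemma Fr_nonneg {n : Type*} [Fintype n] (M : Matrix n n ℂ) : 0 ≤ Fr M :=
  Finset.sum_nonneg fun _ _ => Complex.normSq_nonneg _

lemma purity_eq_Fr {n : Type*} [Fintype n] {M : Matrix n n ℂ} (h : M.IsHermitian) :
    purity M = Fr M := by
  unfold purity Fr
  rw [Fintype.sum_prod_type, Matrix.trace, Complex.re_sum]
  refine Finset.sum_congr rfl fun u _ => ?_
  rw [Matrix.diag_apply, Matrix.mul_apply, Complex.re_sum]
  refine Finset.sum_congr rfl fun v _ => ?_
  have hvu : M v u = starRingEnd ℂ (M u v) := by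
    have := h.apply v u
    simpa using this.symm
  rw [hvu, Complex.mul_conj]
  simp

lemma herm_ptraceA {m p : Type*} [Fintype m] {M : Matrix (m × p) (m × p) ℂ}
    (h : M.IsHermitian) : (ptraceA M).IsHermitian := by
  apply Matrix.IsHermitian.ext
  intro i j
  simp only [ptraceA, Matrix.of_apply, star_sum]
  refine Finset.sum_congr rfl fun k _ => ?_
  exact h.apply (k, i) (k, j)

lemma herm_ptraceMid {a b c : Type*} [Fintype b] {M : Matrix (a × b × c) (a × b × c) ℂ}
    (h : M.IsHermitian) : (ptraceMid M).IsHermitian := by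
  apply Matrix.IsHermitian.ext
  intro i j
  simp only [ptraceMid, Matrix.of_apply, star_sum]
  refine Finset.sum_congr rfl fun k _ => ?_
  exact h.apply (i.1, k, i.2) (j.1, k, j.2)

/-- Per-index twirl identity. -/
lemma key_one {β : Type*} [Fintype β] [DecidableEq β] (hβ : 0 < Fintype.card β)
    (g : β → β → ℂ) :
    ∑ b, ∑ b', Complex.normSq (g b b' -
        if b = b' then (∑ x, g x x) / (Fintype.card β : ℂ) else 0)
      = (∑ b, ∑ b', Complex.normSq (g b b'))
        - Complex.normSq (∑ x, g x x) / (Fintype.card β : ℝ) := by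
  set G : ℂ := ∑ x, g x x with hG
  have hd : (0:ℝ) < (Fintype.card β : ℝ) := by exact_mod_cast hβ
  have expand : ∀ b b', Complex.normSq (g b b' - if b = b' then G / (Fintype.card β : ℂ) else 0)
      = Complex.normSq (g b b')
        + (if b = b' then Complex.normSq (G / (Fintype.card β : ℂ))
            - 2 * (g b b' * starRingEnd ℂ (G / (Fintype.card β : ℂ))).re else 0) := by
    intro b b'
    by_cases hbb : b = b'
    · simp [hbb, Complex.normSq_sub]; ring
    · simp [hbb]
  simp only [expand, Finset.sum_add_distrib, Finset.sum_ite_eq, Finset.mem_univ, if_true]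
  have h2 : ∑ b, (g b b * starRingEnd ℂ (G / (Fintype.card β : ℂ))).re
      = Complex.normSq G / (Fintype.card β : ℝ) := by
    rw [← Complex.re_sum, ← Finset.sum_mul, ← hG, map_div₀, map_natCast, div_eq_mul_inv,
      ← mul_assoc, Complex.mul_conj, ← Complex.ofReal_natCast, ← Complex.ofReal_inv,
      ← Complex.ofReal_mul, Complex.ofReal_re, div_eq_mul_inv]
  have h3 : Complex.normSq (G / (Fintype.card β : ℂ))
      = Complex.normSq G / ((Fintype.card β : ℝ) * (Fintype.card β : ℝ)) := by
    rw [Complex.normSq_div, Complex.normSq_natCast]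
  rw [Finset.sum_sub_distrib, Finset.sum_const, ← Finset.mul_sum, h2, h3,
    Finset.card_univ, nsmul_eq_mul]
  field_simp
  ring

/-- Summed twirl identity. -/
lemma key_sum {ι β : Type*} [Fintype ι] [Fintype β] [DecidableEq β] (hβ : 0 < Fintype.card β)
    (g : ι → β → β → ℂ) :
    ∑ i, ∑ b, ∑ b', Complex.normSq (g i b b' -
        if b = b' then (∑ x, g i x x) / (Fintype.card β : ℂ) else 0)
      = (∑ i, ∑ b, ∑ b', Complex.normSq (g i b b'))
        - (∑ i, Complex.normSq (∑ x, g i x x)) / (Fintype.card β : ℝ) := by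
  rw [Finset.sum_div, ← Finset.sum_sub_distrib]
  exact Finset.sum_congr rfl fun i _ => key_one hβ (g i)

def eBig (A B C : Type*) : (((A × C) × (A × C)) × (B × B)) ≃ ((A × B × C) × (A × B × C)) where
  toFun x := ((x.1.1.1, x.2.1, x.1.1.2), (x.1.2.1, x.2.2, x.1.2.2))
  invFun u := (((u.1.1, u.1.2.2), (u.2.1, u.2.2.2)), (u.1.2.1, u.2.2.1))
  left_inv _ := rfl
  right_inv _ := rfl

def ePair (α κ : Type*) : ((κ × κ) × (α × α)) ≃ ((α × κ) × (α × κ)) where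
  toFun x := ((x.2.1, x.1.1), (x.2.2, x.1.2))
  invFun u := ((u.1.2, u.2.2), (u.1.1, u.2.1))
  left_inv _ := rfl
  right_inv _ := rfl

lemma Fr_big {A B C : Type*} [Fintype A] [Fintype B] [Fintype C]
    (M : Matrix (A × B × C) (A × B × C) ℂ) :
    Fr M = ∑ i : (A × C) × (A × C), ∑ b, ∑ b',
        Complex.normSq (M (i.1.1, b, i.1.2) (i.2.1, b', i.2.2)) := by
  rw [Fr, ← Fintype.sum_equiv (eBig A B C)
    (fun y => Complex.normSq (M ((eBig A B C) y).1 ((eBig A B C) y).2))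
    (fun x => Complex.normSq (M x.1 x.2)) (fun y => rfl)]
  rw [Fintype.sum_prod_type]
  refine Finset.sum_congr rfl fun i _ => ?_
  rw [Fintype.sum_prod_type]
  rfl

lemma Fr_pair {α κ : Type*} [Fintype α] [Fintype κ]
    (M : Matrix (α × κ) (α × κ) ℂ) :
    Fr M = ∑ x : κ × κ, ∑ a, ∑ a', Complex.normSq (M (a, x.1) (a', x.2)) := by
  rw [Fr, ← Fintype.sum_equiv (ePair α κ)
    (fun y => Complex.normSq (M ((ePair α κ) y).1 ((ePair α κ) y).2))
    (fun x => Complex.normSq (M x.1 x.2)) (fun y => rfl)]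
  rw [Fintype.sum_prod_type]
  refine Finset.sum_congr rfl fun i _ => ?_
  rw [Fintype.sum_prod_type]
  rfl

/-- Cauchy–Schwarz for the partial trace. -/
lemma Fr_ptraceA_le {α κ : Type*} [Fintype α] [Fintype κ]
    (M : Matrix (α × κ) (α × κ) ℂ) :
    Fr (ptraceA M) ≤ (Fintype.card α : ℝ) * Fr M := by
  rw [Fr_pair M, Fr, Finset.mul_sum]
  apply Finset.sum_le_sum
  intro x _
  have step1 : Complex.normSq (ptraceA M x.1 x.2)
      ≤ (Fintype.card α : ℝ) * ∑ a, Complex.normSq (M (a, x.1) (a, x.2)) := by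
    have habs : ‖∑ a, M (a, x.1) (a, x.2)‖
        ≤ ∑ a, ‖M (a, x.1) (a, x.2)‖ := by
      simpa using norm_sum_le Finset.univ (fun a => M (a, x.1) (a, x.2))
    have hsq : (∑ a, ‖M (a, x.1) (a, x.2)‖) ^ 2
        ≤ (Fintype.card α : ℝ) * ∑ a, ‖M (a, x.1) (a, x.2)‖ ^ 2 := by
      simpa [Finset.card_univ] using
        sq_sum_le_card_mul_sum_sq (s := Finset.univ)
          (f := fun a => ‖M (a, x.1) (a, x.2)‖)
    calc Complex.normSq (ptraceA M x.1 x.2)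
        = ‖∑ a, M (a, x.1) (a, x.2)‖ ^ 2 := by
          rw [Complex.sq_norm]; rfl
      _ ≤ (∑ a, ‖M (a, x.1) (a, x.2)‖) ^ 2 := by
          gcongr
      _ ≤ (Fintype.card α : ℝ) * ∑ a, ‖M (a, x.1) (a, x.2)‖ ^ 2 := hsq
      _ = (Fintype.card α : ℝ) * ∑ a, Complex.normSq (M (a, x.1) (a, x.2)) := by
          simp [Complex.sq_norm]
  refine step1.trans ?_
  gcongr with a _
  exact Finset.single_le_sum (f := fun a' => Complex.normSq (M (a, x.1) (a', x.2)))
    (fun a' _ => Complex.normSq_nonneg _) (Finset.mem_univ a)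

end SSAaux

set_option maxHeartbeats 2000000 in
open SSAaux in
theorem dim_dependent_SSA
    (dA dB dC : ℕ) (hdA : 0 < dA) (hdB : 0 < dB) (hdC : 0 < dC)
    (ρ : Matrix (Fin dA × Fin dB × Fin dC) (Fin dA × Fin dB × Fin dC) ℂ)
    (hρ : IsDensity ρ) :
    (dA : ℝ) * dB * dC * purity ρ ≥
      (dA : ℝ) * dC * purity (ptraceMid ρ) + (dB : ℝ) * dC * purity (ptraceA ρ)
        - (dC : ℝ) * purity (ptraceA (ptraceA ρ)) ∧
    linEnt ρ + (1 / ((dA : ℝ) * dB)) * linEnt (ptraceA (ptraceA ρ)) ≤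
      (1 / (dB : ℝ)) * linEnt (ptraceMid ρ) + (1 / (dA : ℝ)) * linEnt (ptraceA ρ)
        + ((dA : ℝ) * dB + 1 - dA - dB) / ((dA : ℝ) * dB) := by
  obtain ⟨hpsd, -⟩ := hρ
  have hherm : ρ.IsHermitian := hpsd.1
  have hdA' : (0:ℝ) < dA := by exact_mod_cast hdA
  have hdB' : (0:ℝ) < dB := by exact_mod_cast hdB
  have hdC' : (0:ℝ) < dC := by exact_mod_cast hdC
  have hb : 0 < Fintype.card (Fin dB) := by simpa using hdB
  -- the twirled matrix
  set Mt : Matrix (Fin dA × Fin dB × Fin dC) (Fin dA × Fin dB × Fin dC) ℂ :=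
    Matrix.of fun u v => ρ u v -
      if u.2.1 = v.2.1 then (∑ k, ρ (u.1, k, u.2.2) (v.1, k, v.2.2)) / (dB : ℂ) else 0
    with hMt
  -- identity for the big system
  have e1 : Fr Mt = Fr ρ - Fr (ptraceMid ρ) / dB := by
    have h := key_sum (ι := (Fin dA × Fin dC) × (Fin dA × Fin dC)) hb
      (fun i b b' => ρ (i.1.1, b, i.1.2) (i.2.1, b', i.2.2))
    rw [Fr_big Mt, Fr_big ρ]
    have hmid : Fr (ptraceMid ρ) = ∑ i : (Fin dA × Fin dC) × (Fin dA × Fin dC),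
        Complex.normSq (∑ x, ρ (i.1.1, x, i.1.2) (i.2.1, x, i.2.2)) := rfl
    rw [hmid]
    simpa [Fintype.card_fin, hMt] using h
  -- entries of the partial trace of Mt
  have entry : ∀ (b b' : Fin dB) (c c' : Fin dC),
      ptraceA Mt (b, c) (b', c') = ptraceA ρ (b, c) (b', c') -
        (if b = b' then (∑ x, ptraceA ρ (x, c) (x, c')) / (dB : ℂ) else 0) := by
    intro b b' c c'
    show (∑ a, Mt (a, b, c) (a, b', c')) = _
    rw [hMt]
    simp only [Matrix.of_apply]
    rw [Finset.sum_sub_distrib]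
    congr 1
    by_cases hbb : b = b'
    · simp only [hbb, if_true, ← Finset.sum_div]
      congr 1
      rw [Finset.sum_comm]
      rfl
    · simp [hbb]
  -- identity for the BC system
  have e2 : Fr (ptraceA Mt) = Fr (ptraceA ρ) - Fr (ptraceA (ptraceA ρ)) / dB := by
    have h := key_sum (ι := Fin dC × Fin dC) hb
      (fun j b b' => ptraceA ρ (b, j.1) (b', j.2))
    rw [Fr_pair (ptraceA Mt), Fr_pair (ptraceA ρ)]
    have hc : Fr (ptraceA (ptraceA ρ)) = ∑ j : Fin dC × Fin dC,
        Complex.normSq (∑ x, ptraceA ρ (x, j.1) (x, j.2)) := rfl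
    rw [hc]
    calc ∑ x : Fin dC × Fin dC, ∑ a, ∑ a', Complex.normSq ((ptraceA Mt) (a, x.1) (a', x.2))
        = ∑ x : Fin dC × Fin dC, ∑ a, ∑ a', Complex.normSq
            ((ptraceA ρ) (a, x.1) (a', x.2) -
              if a = a' then (∑ y, ptraceA ρ (y, x.1) (y, x.2)) / (dB : ℂ) else 0) := by
          refine Finset.sum_congr rfl fun x _ => Finset.sum_congr rfl fun a _ =>
            Finset.sum_congr rfl fun a' _ => ?_
          rw [entry]
      _ = _ := by simpa [Fintype.card_fin] using h
  -- Cauchy-Schwarz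
  have e3 : Fr (ptraceA Mt) ≤ (dA : ℝ) * Fr Mt := by
    simpa [Fintype.card_fin] using Fr_ptraceA_le Mt
  -- purity identifications
  have p0 : purity ρ = Fr ρ := purity_eq_Fr hherm
  have pAC : purity (ptraceMid ρ) = Fr (ptraceMid ρ) := purity_eq_Fr (herm_ptraceMid hherm)
  have pBC : purity (ptraceA ρ) = Fr (ptraceA ρ) := purity_eq_Fr (herm_ptraceA hherm)
  have pC : purity (ptraceA (ptraceA ρ)) = Fr (ptraceA (ptraceA ρ)) :=
    purity_eq_Fr (herm_ptraceA (herm_ptraceA hherm))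
  -- cleared versions
  have e1' : (dB : ℝ) * Fr Mt = dB * Fr ρ - Fr (ptraceMid ρ) := by
    rw [e1]; field_simp
  have e2' : (dB : ℝ) * Fr (ptraceA Mt) = dB * Fr (ptraceA ρ) - Fr (ptraceA (ptraceA ρ)) := by
    rw [e2]; field_simp
  have key' : (dB : ℝ) * Fr (ptraceA ρ) - Fr (ptraceA (ptraceA ρ))
      ≤ (dA : ℝ) * ((dB : ℝ) * Fr ρ - Fr (ptraceMid ρ)) := by
    nlinarith [mul_le_mul_of_nonneg_left e3 hdB'.le]
  have part1 : (dA : ℝ) * dB * dC * purity ρ ≥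
      (dA : ℝ) * dC * purity (ptraceMid ρ) + (dB : ℝ) * dC * purity (ptraceA ρ)
        - (dC : ℝ) * purity (ptraceA (ptraceA ρ)) := by
    rw [p0, pAC, pBC, pC]
    nlinarith [mul_le_mul_of_nonneg_left key' hdC'.le]
  refine ⟨part1, ?_⟩
  have hq : (dA : ℝ) * dB * purity ρ + purity (ptraceA (ptraceA ρ))
      ≥ dA * purity (ptraceMid ρ) + dB * purity (ptraceA ρ) := by
    nlinarith [part1, hdC', sq_nonneg ((dC:ℝ))]
  unfold linEnt
  rw [← sub_nonneg]
  have expand : (1 / (dB : ℝ)) * (1 - purity (ptraceMid ρ)) + (1 / (dA : ℝ)) * (1 - purity (ptraceA ρ))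
        + ((dA : ℝ) * dB + 1 - dA - dB) / ((dA : ℝ) * dB)
      - ((1 - purity ρ) + (1 / ((dA : ℝ) * dB)) * (1 - purity (ptraceA (ptraceA ρ))))
      = ((dA : ℝ) * dB * purity ρ + purity (ptraceA (ptraceA ρ))
          - (dA : ℝ) * purity (ptraceMid ρ) - (dB : ℝ) * purity (ptraceA ρ)) / ((dA : ℝ) * dB) := by
    field_simp
    ring
  rw [expand]
  apply div_nonneg
  · linarith [hq]
  · positivity
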